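/- Let q, d ≥ 3 be integers, β > 0 real, and x ∈ (1/q, 1) satisfy the ferromagnetic BP fixed-point equation as above with t = (1+(e^β-1)x)/(1+(e^β-1)·(1-x)/(q-1)). Define ν(1) = t^d/(t^d + q - 1), r = (e^β-1)x/(1+(e^β-1)x), φ = (1-x)/((q-1)x), and χ = 1 - (1 - r + r·φ)^d. Then χ = (q·ν(1) - 1)/((q-1)·ν(1)), equivalently 1 - q·(1-ν(1))/(q-1) = χ·ν(1). -/
import Mathlib


/-- The density χ of the giant cluster within the dominant colour class
matches the ferromagnetic marginal ν(1). -/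
theorem giant_density_identity (q d : ℕ) (hq : 3 ≤ q) (hd : 3 ≤ d)
    (β x : ℝ) (hβ : 0 < β) (hx : x ∈ Set.Ioo (1/(q:ℝ)) 1)
    (hfix : x = (1+(Real.exp β-1)*x)^(d-1) /
      ((1+(Real.exp β-1)*x)^(d-1)
        + ((q:ℝ)-1)*(1+(Real.exp β-1)*(1-x)/((q:ℝ)-1))^(d-1)))
    (t ν1 r φ χ : ℝ)
    (ht : t = (1+(Real.exp β-1)*x)/(1+(Real.exp β-1)*(1-x)/((q:ℝ)-1)))
    (hν1 : ν1 = t^d/(t^d + (q:ℝ) - 1))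
    (hr : r = (Real.exp β-1)*x/(1+(Real.exp β-1)*x))
    (hφ : φ = (1-x)/(((q:ℝ)-1)*x))
    (hχ : χ = 1 - (1 - r + r*φ)^d) :
    χ = ((q:ℝ)*ν1 - 1)/(((q:ℝ)-1)*ν1) ∧
    1 - (q:ℝ)*(1-ν1)/((q:ℝ)-1) = χ*ν1 := by
  have hq3 : (3:ℝ) ≤ (q:ℝ) := by exact_mod_cast hq
  have hq1 : (0:ℝ) < (q:ℝ) - 1 := by linarith
  have hE : 0 < Real.exp β - 1 := by
    have h := Real.exp_lt_exp.mpr hβ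
    rw [Real.exp_zero] at h
    linarith
  have hx0 : 0 < x := lt_trans (by positivity) hx.1
  have hx1 : x < 1 := hx.2
  have ha : 0 < 1+(Real.exp β-1)*x := by nlinarith
  have hb : 0 < 1+(Real.exp β-1)*(1-x)/((q:ℝ)-1) := by
    have h1 : 0 ≤ 1 - x := by linarith
    have : 0 ≤ (Real.exp β-1)*(1-x)/((q:ℝ)-1) := by positivity
    linarith
  have ht0 : 0 < t := ht ▸ div_pos ha hb
  have key : 1 - r + r*φ = t⁻¹ := by
    rw [hr, hφ, ht]
    field_simp
    ring
  have htd : 0 < t^d := pow_pos ht0 d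
  have hden : 0 < t^d + (q:ℝ) - 1 := by linarith
  have hχ' : χ = 1 - (t^d)⁻¹ := by rw [hχ, key, inv_pow]
  constructor
  · rw [hχ', hν1]
    field_simp
    ring
  · rw [hχ', hν1]
    field_simp
    ring
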